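/- Let X be a complex separable Banach space and let T ∈ B(X) be invertible and transitive (T has no nontrivial closed invariant subspace). Let x₀ ∈ X be nonzero, and for k ≥ 1 let 𝔑₋ₖ be the closed linear span of {T^{−n}x₀ : n ≥ k}; write 𝔑 = 𝔑₋₁. If 𝔑 ≠ X, then the sequence (𝔑₋ₖ)_{k≥1} is strictly decreasing (𝔑₋₍ₖ₊₁₎ ⊊ 𝔑₋ₖ for all k ≥ 1) and ⋂_{k≥1} 𝔑₋ₖ = {0}. -/

import Mathlib

/-- `𝔑₋ₖ`: the closed linear span of `{S^n x₀ : n ≥ k}` (here `S = T⁻¹`). -/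
def closedSpanOrbitFrom {X : Type*} [NormedAddCommGroup X] [NormedSpace ℂ X]
    (S : X →L[ℂ] X) (x₀ : X) (k : ℕ) : Submodule ℂ X :=
  (Submodule.span ℂ {y : X | ∃ n : ℕ, k ≤ n ∧ y = (S ^ n) x₀}).topologicalClosure

/-- `T` is transitive: it has no nontrivial closed invariant subspace. -/
def IsTransitiveOp {X : Type*} [NormedAddCommGroup X] [NormedSpace ℂ X]
    (T : X →L[ℂ] X) : Prop :=
  ∀ Y : Submodule ℂ X, IsClosed (Y : Set X) → (∀ x ∈ Y, T x ∈ Y) → Y = ⊥ ∨ Y = ⊤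

/-- Let `X` be a complex separable Banach space, `T ∈ B(X)` invertible
(with inverse `S`) and transitive, `x₀ ≠ 0` with `𝔑 = 𝔑₋₁ ≠ X`. Then `(𝔑₋ₖ)_{k≥1}` is
strictly decreasing and `⋂_{k≥1} 𝔑₋ₖ = {0}`. -/
theorem closedSpanOrbit_strict_decreasing_and_inter_bot
    (X : Type*) [NormedAddCommGroup X] [NormedSpace ℂ X] [CompleteSpace X]
    [TopologicalSpace.SeparableSpace X]
    (T S : X →L[ℂ] X)
    (hTS : T.comp S = ContinuousLinearMap.id ℂ X)
    (hST : S.comp T = ContinuousLinearMap.id ℂ X)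
    (htrans : IsTransitiveOp T)
    (x₀ : X) (hx₀ : x₀ ≠ 0)
    (hN : closedSpanOrbitFrom S x₀ 1 ≠ ⊤) :
    (∀ k : ℕ, 1 ≤ k → closedSpanOrbitFrom S x₀ (k + 1) < closedSpanOrbitFrom S x₀ k) ∧
    (⨅ k : ℕ, closedSpanOrbitFrom S x₀ (k + 1)) = ⊥ := by
  classical
  set N : ℕ → Submodule ℂ X := closedSpanOrbitFrom S x₀ with hNdef
  have hTSx : ∀ y : X, T (S y) = y := by
    intro y
    have := ContinuousLinearMap.ext_iff.mp hTS y
    simpa using this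
  have hSinj : Function.Injective S := fun a b h => by
    rw [← hTSx a, ← hTSx b, h]
  have hpow : ∀ n : ℕ, (S ^ n) x₀ ≠ 0 := by
    intro n
    induction n with
    | zero => simpa using hx₀
    | succ n ih =>
      rw [pow_succ', ContinuousLinearMap.mul_apply]
      intro h
      exact ih (hSinj (by rw [h, map_zero]))
  have hmem : ∀ k : ℕ, (S ^ k) x₀ ∈ N k := fun k =>
    Submodule.le_topologicalClosure _ (Submodule.subset_span ⟨k, le_refl k, rfl⟩)
  have hmono : ∀ k : ℕ, N (k + 1) ≤ N k := fun k =>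
    Submodule.topologicalClosure_mono (Submodule.span_mono
      (fun y ⟨n, hn, hy⟩ => ⟨n, le_trans (Nat.le_succ k) hn, hy⟩))
  have hanti : Antitone N := antitone_nat_of_succ_le hmono
  -- key fact: T maps N (k+1) into N k
  have hT : ∀ k : ℕ, ∀ x ∈ N (k + 1), T x ∈ N k := by
    intro k
    have hcl : IsClosed ((Submodule.comap (T : X →ₗ[ℂ] X) (N k)) : Set X) := by
      have : ((Submodule.comap (T : X →ₗ[ℂ] X) (N k)) : Set X) = T ⁻¹' (N k : Set X) := rfl
      rw [this]
      exact (Submodule.isClosed_topologicalClosure _).preimage T.continuous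
    have hspan : Submodule.span ℂ {y : X | ∃ n : ℕ, k + 1 ≤ n ∧ y = (S ^ n) x₀} ≤
        Submodule.comap (T : X →ₗ[ℂ] X) (N k) := by
      rw [Submodule.span_le]
      rintro y ⟨n, hn, rfl⟩
      simp only [SetLike.mem_coe, Submodule.mem_comap, ContinuousLinearMap.coe_coe]
      obtain ⟨m, rfl⟩ : ∃ m, n = m + 1 := ⟨n - 1, by omega⟩
      have hTm : T ((S ^ (m + 1)) x₀) = (S ^ m) x₀ := by
        rw [pow_succ', ContinuousLinearMap.mul_apply, hTSx]
      rw [hTm]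
      exact Submodule.le_topologicalClosure _ (Submodule.subset_span ⟨m, by omega, rfl⟩)
    intro x hx
    exact Submodule.topologicalClosure_minimal _ hspan hcl hx
  constructor
  · intro k hk
    refine lt_of_le_of_ne (hmono k) ?_
    intro heq
    have hinv : ∀ x ∈ N k, T x ∈ N k := fun x hx => hT k x (by rw [heq]; exact hx)
    rcases htrans (N k) (Submodule.isClosed_topologicalClosure _) hinv with h | h
    · exact hpow k (by simpa [h] using hmem k)
    · exact hN (top_le_iff.mp (h.symm.le.trans (hanti hk)))
  · set M : Submodule ℂ X := ⨅ k : ℕ, N (k + 1) with hMdef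
    have hMclosed : IsClosed (M : Set X) := by
      rw [hMdef]
      rw [Submodule.coe_iInf]
      exact isClosed_iInter fun i => Submodule.isClosed_topologicalClosure _
    have hMinv : ∀ x ∈ M, T x ∈ M := by
      intro x hx
      rw [hMdef, Submodule.mem_iInf] at hx ⊢
      intro k
      exact hT (k + 1) x (hx (k + 1))
    rcases htrans M hMclosed hMinv with h | h
    · exact h
    · exact absurd (top_le_iff.mp (h.symm.le.trans (iInf_le _ 0))) hN
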